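/- In the setting of the previous lemma (q(u₊) = 0, q(u₋) = u₋ ⊗ u₋), the map S : V^⊗L → V^⊗(L+1) defined by S(ψ) = u₊ ⊗ ψ satisfies the anticommutation relation S∘Q = -Q∘S on V^⊗L for every L ≥ 1, and hence descends to a well-defined map S♯ : H^L → H^{L+1} on cohomology given by S♯[ψ] = [u₊ ⊗ ψ]. Moreover S♯ is a bijection for every L ≥ 1. -/

import Mathlib

open Matrix

noncomputable section

/-- Matrix of the operator `q_j` that applies the local supercharge (with matrix
elements `qm a b t`, i.e. `q e_t = ∑ a b, qm a b t • e_a ⊗ e_b`) on the `j`-th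
tensor factor of `V^⊗L`, `V = ℂ²`. -/
def qjMat (qm : Fin 2 → Fin 2 → Fin 2 → ℂ) (L : ℕ) (j : Fin L) :
    Matrix (Fin (L + 1) → Fin 2) (Fin L → Fin 2) ℂ := fun s s' =>
  if ∀ i : Fin L, i ≠ j → s (Fin.succAbove j.succ i) = s' i then
    qm (s j.castSucc) (s j.succ) (s' j)
  else 0

/-- The supercharge `Q = ∑_{j=1}^L (-1)^j q_j : V^⊗L → V^⊗(L+1)`. -/
def Qop (qm : Fin 2 → Fin 2 → Fin 2 → ℂ) (L : ℕ) :
    ((Fin L → Fin 2) → ℂ) →ₗ[ℂ] ((Fin (L + 1) → Fin 2) → ℂ) :=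
  (∑ j : Fin L, ((-1 : ℂ) ^ ((j : ℕ) + 1)) • qjMat qm L j).mulVecLin

/-- The map `S : V^⊗L → V^⊗(L+1)`, `S ψ = u ⊗ ψ`. -/
def Sop (u : Fin 2 → ℂ) (L : ℕ) :
    ((Fin L → Fin 2) → ℂ) →ₗ[ℂ] ((Fin (L + 1) → Fin 2) → ℂ) :=
  Matrix.mulVecLin
    (Matrix.of fun (s : Fin (L + 1) → Fin 2) (s' : Fin L → Fin 2) =>
      if ∀ i : Fin L, s i.succ = s' i then u (s 0) else 0)

lemma collapse {L : ℕ} (base : Fin L → Fin 2) (j : Fin L)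
    (G : (Fin L → Fin 2) → ℂ) :
    (∑ s' : Fin L → Fin 2, if ∀ i, i ≠ j → base i = s' i then G s' else 0)
      = ∑ t : Fin 2, G (Function.update base j t) := by
  classical
  rw [← Finset.sum_filter]
  refine Finset.sum_nbij' (fun s' => s' j) (fun t => Function.update base j t)
    ?_ ?_ ?_ ?_ ?_
  · intro a _; exact Finset.mem_univ _
  · intro t _
    simp only [Finset.mem_filter, Finset.mem_univ, true_and]
    intro i hi
    rw [Function.update_apply, if_neg hi]
  · intro a ha
    simp only [Finset.mem_filter, Finset.mem_univ, true_and] at ha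
    funext i
    rcases eq_or_ne i j with rfl | hi
    · simp
    · rw [Function.update_apply, if_neg hi, ← ha i hi]
  · intro t _; simp
  · intro a ha
    simp only [Finset.mem_filter, Finset.mem_univ, true_and] at ha
    congr 1
    funext i
    rcases eq_or_ne i j with rfl | hi
    · simp
    · rw [Function.update_apply, if_neg hi, ← ha i hi]

lemma Qop_apply (qm : Fin 2 → Fin 2 → Fin 2 → ℂ) (L : ℕ)
    (ψ : (Fin L → Fin 2) → ℂ) (s : Fin (L + 1) → Fin 2) :
    Qop qm L ψ s = ∑ j : Fin L, (-1 : ℂ) ^ ((j : ℕ) + 1) *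
      ∑ t : Fin 2, qm (s j.castSucc) (s j.succ) t *
        ψ (Function.update (fun i => s (Fin.succAbove j.succ i)) j t) := by
  classical
  simp only [Qop, mulVecLin_apply, mulVec, dotProduct, Matrix.sum_apply,
    Matrix.smul_apply, smul_eq_mul, Finset.sum_mul]
  rw [Finset.sum_comm]
  refine Finset.sum_congr rfl fun j _ => ?_
  rw [Finset.mul_sum]
  have h1 : ∀ s' : Fin L → Fin 2, (-1 : ℂ) ^ ((j : ℕ) + 1) * qjMat qm L j s s' * ψ s'
      = if ∀ i, i ≠ j → s (Fin.succAbove j.succ i) = s' i then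
          (-1 : ℂ) ^ ((j : ℕ) + 1) *
            (qm (s j.castSucc) (s j.succ) (s' j) * ψ s') else 0 := by
    intro s'
    simp [qjMat, ite_mul, mul_ite, mul_zero, zero_mul, mul_assoc]
  rw [Finset.sum_congr rfl fun s' _ => h1 s', collapse]
  simp

lemma Sop_apply (u : Fin 2 → ℂ) (L : ℕ) (ψ : (Fin L → Fin 2) → ℂ)
    (x : Fin (L + 1) → Fin 2) :
    Sop u L ψ x = u (x 0) * ψ (fun i => x i.succ) := by
  classical
  simp only [Sop, mulVecLin_apply, mulVec, dotProduct, Matrix.of_apply]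
  rw [show (∑ s' : Fin L → Fin 2,
      (if ∀ i : Fin L, x i.succ = s' i then u (x 0) else 0) * ψ s')
    = ∑ s' : Fin L → Fin 2,
      (if (fun i => x i.succ) = s' then u (x 0) * ψ s' else 0) from
    Finset.sum_congr rfl fun s' _ => by
      simp [funext_iff, ite_mul]]
  rw [Finset.sum_ite_eq]
  simp

lemma Qop_zero (qm : Fin 2 → Fin 2 → Fin 2 → ℂ) (ψ : (Fin 0 → Fin 2) → ℂ) :
    Qop qm 0 ψ = 0 := by
  simp [Qop]

lemma dup_zero {L : ℕ} (c t' : Fin 2) (x : Fin (L + 1) → Fin 2) :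
    Function.update
        (fun i : Fin (L + 1) =>
          (Fin.cons c x : Fin (L + 2) → Fin 2)
            (Fin.succAbove (0 : Fin (L + 1)).succ i)) 0 t'
      = Fin.cons t' (fun k : Fin L => x k.succ) := by
  funext i
  induction i using Fin.cases with
  | zero => simp
  | succ k =>
    rw [Function.update_apply, if_neg (Fin.succ_ne_zero k)]
    simp [Fin.succ_succAbove_succ]

lemma dup_succ {L : ℕ} (c t' : Fin 2) (x : Fin (L + 1) → Fin 2) (i : Fin L) :
    Function.update
        (fun k : Fin (L + 1) =>
          (Fin.cons c x : Fin (L + 2) → Fin 2)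
            (Fin.succAbove (i.succ : Fin (L + 1)).succ k)) i.succ t'
      = Fin.cons c
          (Function.update (fun m : Fin L => x (Fin.succAbove i.succ m)) i t') := by
  funext k
  induction k using Fin.cases with
  | zero =>
    rw [Function.update_apply, if_neg (Fin.succ_ne_zero i).symm]
    simp
  | succ m =>
    simp only [Function.update_apply, Fin.succ_inj, Fin.succ_succAbove_succ,
      Fin.cons_succ]


lemma Qop_cons (qm : Fin 2 → Fin 2 → Fin 2 → ℂ) (L : ℕ)
    (φ : (Fin (L + 1) → Fin 2) → ℂ) (c : Fin 2) (x : Fin (L + 1) → Fin 2) :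
    Qop qm (L + 1) φ (Fin.cons c x)
      = -(∑ t : Fin 2, qm c (x 0) t * φ (Fin.cons t (fun k : Fin L => x k.succ)))
        - ∑ i : Fin L, (-1 : ℂ) ^ ((i : ℕ) + 1) *
            ∑ t : Fin 2, qm (x i.castSucc) (x i.succ) t *
              φ (Fin.cons c
                (Function.update (fun m : Fin L => x (Fin.succAbove i.succ m)) i t)) := by
  rw [Qop_apply, Fin.sum_univ_succ, sub_eq_add_neg]
  congr 1
  · -- j = 0 term
    rw [show (((0 : Fin (L + 1)) : ℕ) + 1) = 1 by simp, pow_one, neg_one_mul, neg_inj]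
    refine Finset.sum_congr rfl fun t _ => ?_
    rw [dup_zero]
    rw [Fin.castSucc_zero, Fin.cons_zero]
    rw [Fin.cons_succ]
  · -- j = i.succ terms
    rw [← Finset.sum_neg_distrib]
    refine Finset.sum_congr rfl fun i _ => ?_
    simp only [dup_succ]
    rw [← Fin.succ_castSucc, Fin.cons_succ, Fin.cons_succ]
    rw [Fin.val_succ, pow_succ]
    ring

lemma AC (qm : Fin 2 → Fin 2 → Fin 2 → ℂ) (up : Fin 2 → ℂ)
    (hup : ∀ a b : Fin 2, ∑ t : Fin 2, qm a b t * up t = 0)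
    (L : ℕ) (ψ : (Fin L → Fin 2) → ℂ) (s : Fin (L + 2) → Fin 2) :
    Sop up (L + 1) (Qop qm L ψ) s = -(Qop qm (L + 1) (Sop up L ψ) s) := by
  induction s using Fin.consCases with | cons c x =>
  rw [Qop_cons]
  have h1 : (∑ t : Fin 2, qm c (x 0) t *
      Sop up L ψ (Fin.cons t (fun k : Fin L => x k.succ))) = 0 := by
    rw [show (0 : ℂ) = (∑ t : Fin 2, qm c (x 0) t * up t) *
        ψ (fun k : Fin L => x k.succ) by rw [hup]; ring]
    rw [Finset.sum_mul]
    refine Finset.sum_congr rfl fun t _ => ?_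
    rw [Sop_apply, Fin.cons_zero]
    simp only [Fin.cons_succ]
    ring
  rw [h1, neg_zero, zero_sub, neg_neg]
  rw [Sop_apply, Fin.cons_zero]
  simp only [Fin.cons_succ]
  rw [Qop_apply]
  have h2 : ∀ (i : Fin L) (t : Fin 2),
      Sop up L ψ (Fin.cons c
        (Function.update (fun m : Fin L => x (Fin.succAbove i.succ m)) i t))
      = up c * ψ (Function.update (fun m : Fin L => x (Fin.succAbove i.succ m)) i t) := by
    intro i t
    rw [Sop_apply, Fin.cons_zero]
    simp only [Fin.cons_succ]
  simp only [h2, Finset.mul_sum]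
  refine Finset.sum_congr rfl fun i _ => ?_
  refine Finset.sum_congr rfl fun t _ => ?_
  ring

lemma Kb (qm : Fin 2 → Fin 2 → Fin 2 → ℂ) (um w1 wb : Fin 2 → ℂ)
    (hqm : ∀ a b t : Fin 2, qm a b t = um a * um b * w1 t)
    (e : ℂ) (hwb : (∑ t : Fin 2, wb t * um t) = e)
    (L : ℕ) (φ : (Fin (L + 1) → Fin 2) → ℂ) (x : Fin (L + 1) → Fin 2) :
    (∑ t : Fin 2, wb t * Qop qm (L + 1) φ (Fin.cons t x))
      = -(e * Sop um L (fun y => ∑ t : Fin 2, w1 t * φ (Fin.cons t y)) x)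
        - Qop qm L (fun y => ∑ t : Fin 2, wb t * φ (Fin.cons t y)) x := by
  have hA : ∀ t : Fin 2,
      (∑ t' : Fin 2, qm t (x 0) t' * φ (Fin.cons t' (fun k : Fin L => x k.succ)))
      = um t * (um (x 0) *
          ∑ t' : Fin 2, w1 t' * φ (Fin.cons t' (fun k : Fin L => x k.succ))) := by
    intro t
    simp only [Finset.mul_sum]
    refine Finset.sum_congr rfl fun t' _ => ?_
    rw [hqm]; ring
  simp only [Qop_cons, hA, mul_sub, mul_neg]
  rw [Finset.sum_sub_distrib]
  congr 1
  · rw [Finset.sum_neg_distrib, Sop_apply, ← hwb, Finset.sum_mul, neg_inj]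
    refine Finset.sum_congr rfl fun t _ => ?_
    ring
  · rw [Qop_apply]
    simp only [Finset.mul_sum]
    rw [Finset.sum_comm]
    refine Finset.sum_congr rfl fun i _ => ?_
    rw [Finset.sum_comm]
    refine Finset.sum_congr rfl fun t' _ => ?_
    refine Finset.sum_congr rfl fun t _ => ?_
    ring

lemma DS (u wb : Fin 2 → ℂ) (e : ℂ) (hwb : (∑ t : Fin 2, wb t * u t) = e)
    (L : ℕ) (ψ : (Fin L → Fin 2) → ℂ) (x : Fin L → Fin 2) :
    (∑ t : Fin 2, wb t * Sop u L ψ (Fin.cons t x)) = e * ψ x := by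
  rw [← hwb, Finset.sum_mul]
  refine Finset.sum_congr rfl fun t _ => ?_
  rw [Sop_apply, Fin.cons_zero]
  simp only [Fin.cons_succ]
  ring

lemma recon (up um w0 w1 : Fin 2 → ℂ)
    (hPw : ∀ a t : Fin 2, up a * w0 t + um a * w1 t = if a = t then 1 else 0)
    (L : ℕ) (φ : (Fin (L + 1) → Fin 2) → ℂ) (x : Fin (L + 1) → Fin 2) :
    Sop up L (fun y => ∑ t : Fin 2, w0 t * φ (Fin.cons t y)) x
      + Sop um L (fun y => ∑ t : Fin 2, w1 t * φ (Fin.cons t y)) x = φ x := by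
  simp only [Sop_apply]
  have key : φ x = ∑ t : Fin 2,
      (if x 0 = t then (1 : ℂ) else 0) * φ (Fin.cons t (fun i => x i.succ)) := by
    simp only [ite_mul, one_mul, zero_mul]
    rw [Finset.sum_ite_eq]
    simp only [Finset.mem_univ, if_true]
    congr 1
    exact (Fin.cons_self_tail x).symm
  rw [key, Finset.mul_sum, Finset.mul_sum, ← Finset.sum_add_distrib]
  refine Finset.sum_congr rfl fun t _ => ?_
  rw [← hPw (x 0) t]
  ring

/-- in the setting `q u₊ = 0`, `q u₋ = u₋ ⊗ u₋`, the map `S ψ = u₊ ⊗ ψ`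
anticommutes with `Q`, hence descends to cohomology (maps kernels to kernels and images
to images), and the induced map `S♯ : H^L → H^{L+1}` is injective and surjective. -/
theorem stmt3 (qm : Fin 2 → Fin 2 → Fin 2 → ℂ) (up um : Fin 2 → ℂ)
    (hbasis : LinearIndependent ℂ ![up, um])
    (hup : ∀ a b : Fin 2, ∑ t : Fin 2, qm a b t * up t = 0)
    (hum : ∀ a b : Fin 2, ∑ t : Fin 2, qm a b t * um t = um a * um b) :
    -- anticommutation S ∘ Q = - Q ∘ S on V^⊗L for all L ≥ 1
    (∀ L : ℕ, 1 ≤ L →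
      (Sop up (L + 1)) ∘ₗ (Qop qm L) = -((Qop qm (L + 1)) ∘ₗ (Sop up L))) ∧
    -- S maps ker Q into ker Q (S♯ lands in cocycles)
    (∀ L : ℕ, 1 ≤ L → ∀ ψ, Qop qm L ψ = 0 → Qop qm (L + 1) (Sop up L ψ) = 0) ∧
    -- S maps im Q into im Q (S♯ is well defined on classes)
    (∀ L : ℕ, 1 ≤ L → ∀ γ, ∃ γ', Sop up (L + 1) (Qop qm L γ) = Qop qm (L + 1) γ') ∧
    -- injectivity of S♯ at L = 1
    (∀ ψ, Qop qm 1 ψ = 0 → (∃ γ, Sop up 1 ψ = Qop qm 1 γ) → ψ = 0) ∧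
    -- injectivity of S♯ at L ≥ 2
    (∀ L : ℕ, 1 ≤ L → ∀ ψ, Qop qm (L + 1) ψ = 0 →
      (∃ γ, Sop up (L + 1) ψ = Qop qm (L + 1) γ) → ∃ γ₀, ψ = Qop qm L γ₀) ∧
    -- surjectivity of S♯ : H^L → H^{L+1} for all L ≥ 1
    (∀ L : ℕ, 1 ≤ L → ∀ φ, Qop qm (L + 1) φ = 0 →
      ∃ ψ γ, Qop qm L ψ = 0 ∧ φ = Sop up L ψ + Qop qm L γ) := by
  classical
  have key : ∀ g : Fin 2 → ℂ, g 0 • up + g 1 • um = 0 → ∀ i, g i = 0 := by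
    intro g hg
    rw [Fintype.linearIndependent_iff] at hbasis
    refine hbasis g ?_
    rw [Fin.sum_univ_two]
    simpa using hg
  set d : ℂ := up 0 * um 1 - up 1 * um 0 with hd_def
  have hd : d ≠ 0 := by
    intro h
    have h' : up 0 * um 1 - up 1 * um 0 = 0 := h
    have mk2 : ∀ c0 c1 : ℂ, c0 * up 0 + c1 * um 0 = 0 → c0 * up 1 + c1 * um 1 = 0 →
        (![c0, c1] 0 • up + ![c0, c1] 1 • um) = 0 := by
      intro c0 c1 h0 h1
      funext a
      fin_cases a
      · simpa using h0
      · simpa using h1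
    have e1 := key ![um 0, -(up 0)] (mk2 _ _ (by ring) (by linear_combination -h'))
    have e2 := key ![um 1, -(up 1)] (mk2 _ _ (by linear_combination h') (by ring))
    have hup0 : up 0 = 0 := by have := e1 1; simpa using this
    have hup1 : up 1 = 0 := by have := e2 1; simpa using this
    have e3 := key ![1, 0] (mk2 1 0 (by rw [hup0]; ring) (by rw [hup1]; ring))
    have := e3 0
    simp at this
  set w0 : Fin 2 → ℂ := ![um 1 / d, -(um 0 / d)] with hw0_def
  set w1 : Fin 2 → ℂ := ![-(up 1 / d), up 0 / d] with hw1_def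
  have hw0e : w0 0 = um 1 / d := rfl
  have hw0e1 : w0 1 = -(um 0 / d) := rfl
  have hw1e : w1 0 = -(up 1 / d) := rfl
  have hw1e1 : w1 1 = up 0 / d := rfl
  have hw0up : (∑ t : Fin 2, w0 t * up t) = 1 := by
    rw [Fin.sum_univ_two, hw0e, hw0e1]
    field_simp
    ring
  have hw0um : (∑ t : Fin 2, w0 t * um t) = 0 := by
    rw [Fin.sum_univ_two, hw0e, hw0e1]
    field_simp
    ring
  have hw1um : (∑ t : Fin 2, w1 t * um t) = 1 := by
    rw [Fin.sum_univ_two, hw1e, hw1e1]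
    field_simp
    ring
  have hPw : ∀ a t : Fin 2, up a * w0 t + um a * w1 t = if a = t then 1 else 0 := by
    intro a t
    fin_cases a <;> fin_cases t <;>
      simp only [Fin.mk_zero, Fin.mk_one, hw0e, hw0e1, hw1e, hw1e1] <;>
      norm_num <;>
      (try field_simp) <;>
      (try rw [hd_def]) <;>
      (try ring)
  have hqm' : ∀ a b t : Fin 2, qm a b t = um a * um b * w1 t := by
    intro a b t
    have h1 := hup a b
    have h2 := hum a b
    rw [Fin.sum_univ_two] at h1 h2
    fin_cases t
    · show qm a b 0 = um a * um b * w1 0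
      rw [hw1e]
      field_simp
      linear_combination um 1 * h1 - up 1 * h2
    · show qm a b 1 = um a * um b * w1 1
      rw [hw1e1]
      field_simp
      linear_combination -(um 0) * h1 + up 0 * h2
  refine ⟨?_, ?_, ?_, ?_, ?_, ?_⟩
  · -- anticommutation
    intro L _
    apply LinearMap.ext
    intro ψ
    funext s
    have h := AC qm up hup L ψ s
    simpa using h
  · -- ker to ker
    intro L _ ψ h
    funext s
    have h2 := AC qm up hup L ψ s
    rw [h] at h2
    simp only [map_zero, Pi.zero_apply] at h2
    simpa using (neg_eq_zero.mp h2.symm)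
  · -- im to im
    intro L _ γ
    refine ⟨-(Sop up L γ), ?_⟩
    funext s
    have h2 := AC qm up hup L γ s
    rw [map_neg]
    simpa using h2
  · -- injectivity at L = 1
    intro ψ _ hex
    obtain ⟨γ, hγ⟩ := hex
    funext x
    have h1 := DS up w0 1 hw0up 1 ψ x
    have h2 := Kb qm um w1 w0 hqm' 0 hw0um 0 γ x
    rw [hγ] at h1
    rw [Qop_zero] at h2
    simp only [Pi.zero_apply, zero_mul, neg_zero, sub_zero] at h2
    have hz : (1 : ℂ) * ψ x = 0 := by rw [← h1]; exact h2
    simpa using hz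
  · -- injectivity at L ≥ 2
    intro L _ ψ _ hex
    obtain ⟨γ, hγ⟩ := hex
    refine ⟨-(fun y : Fin L → Fin 2 => ∑ t : Fin 2, w0 t * γ (Fin.cons t y)), ?_⟩
    funext x
    have h1 := DS up w0 1 hw0up (L + 1) ψ x
    have h2 := Kb qm um w1 w0 hqm' 0 hw0um L γ x
    rw [hγ] at h1
    rw [map_neg]
    simp only [Pi.neg_apply]
    rw [← one_mul (ψ x), ← h1, h2]
    ring
  · -- surjectivity
    intro L _ φ hφ
    refine ⟨(fun y : Fin L → Fin 2 => ∑ t : Fin 2, w0 t * φ (Fin.cons t y)),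
      -(fun y : Fin L → Fin 2 => ∑ t : Fin 2, w1 t * φ (Fin.cons t y)), ?_, ?_⟩
    · funext x
      have h2 := Kb qm um w1 w0 hqm' 0 hw0um L φ x
      rw [hφ] at h2
      simp only [Pi.zero_apply, mul_zero, Finset.sum_const_zero, zero_mul,
        neg_zero, zero_sub] at h2
      exact neg_eq_zero.mp h2.symm
    · funext x
      have h3 := Kb qm um w1 w1 hqm' 1 hw1um L φ x
      rw [hφ] at h3
      simp only [Pi.zero_apply, mul_zero, Finset.sum_const_zero, one_mul] at h3
      have hrec := recon up um w0 w1 hPw L φ x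
      simp only [Pi.add_apply, map_neg, Pi.neg_apply]
      linear_combination -hrec + h3
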